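/- arXiv:1904.07805 — 9 statements merged into one kernel-verified Lean document; each statement's English description precedes it below -/
import Mathlib

section
/- If (X,·) is a non-degenerate left cycle set, then the map r: X×X → X×X defined by r(x,y) = (λ_x(y), ρ_y(x)), where λ_x = σ_x^{-1} and ρ_y(x) = λ_x(y)·x, is a non-degenerate involutive set-theoretic solution of the Yang-Baxter equation, i.e. r is bijective, r² = id, r₁r₂r₁ = r₂r₁r₂ (with r₁ = r×id, r₂ = id×r), and all maps λ_x and ρ_y are bijective. -/
/-- A left cycle set: each left multiplication `op x` is bijective and the
cycloid identity `(x·y)·(x·z) = (y·x)·(y·z)` holds. -/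
def IsCycleSet {X : Type*} (op : X → X → X) : Prop :=
  (∀ x, Function.Bijective (op x)) ∧
  ∀ x y z, op (op x y) (op x z) = op (op y x) (op y z)

/-- Square-free: `x·x = x` for all `x`. -/
def IsSquareFree {X : Type*} (op : X → X → X) : Prop := ∀ x, op x x = x

/-- Non-degenerate: the squaring map `x ↦ x·x` is bijective. -/
def IsNonDeg {X : Type*} (op : X → X → X) : Prop :=
  Function.Bijective (fun x => op x x)

/-- An automorphism of a left cycle set. -/
def IsAut {X : Type*} (op : X → X → X) (α : X → X) : Prop :=
  Function.Bijective α ∧ ∀ x y, α (op x y) = op (α x) (α y)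

/-- Irretractable: the map `x ↦ σ_x` is injective. -/
def IsIrretractable {X : Type*} (op : X → X → X) : Prop := Function.Injective op

/-- `retRel op n x y` says `σ_{[n]}(x) = σ_{[n]}(y)`, i.e. `x` and `y` have the same
image in the `n`-th retraction `σⁿ(X)`. -/
def retRel {X : Type*} (op : X → X → X) : ℕ → X → X → Prop
  | 0 => Eq
  | n + 1 => fun x y => ∀ z, retRel op n (op x z) (op y z)

/-- `X` has multipermutational level `m`: `m` is minimal with `|σᵐ(X)| = 1`. -/
def HasMPL {X : Type*} (op : X → X → X) (m : ℕ) : Prop :=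
  (∀ x y, retRel op m x y) ∧ ∀ k < m, ¬ (∀ x y, retRel op k x y)

/-- The solution `r(x,y) = (λ_x(y), λ_x(y)·x)` associated to a cycle set,
where `lam x` is the inverse of `op x`. -/
def rmap {X : Type*} (op lam : X → X → X) : X × X → X × X :=
  fun p => (lam p.1 p.2, op (lam p.1 p.2) p.1)

/-- `r × id`. -/
def r1map {X : Type*} (r : X × X → X × X) : X × X × X → X × X × X :=
  fun p => ((r (p.1, p.2.1)).1, ((r (p.1, p.2.1)).2, p.2.2))

/-- `id × r`. -/
def r2map {X : Type*} (r : X × X → X × X) : X × X × X → X × X × X :=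
  fun p => (p.1, r p.2)

/-- One-sided extension of a cycle set by an automorphism `α`, with `none` as the
new element `z`: `x∘y = x·y`, `x∘z = z`, `z∘y = α(y)`. -/
def extOp {X : Type*} (op : X → X → X) (α : X → X) :
    Option X → Option X → Option X
  | some x, some y => some (op x y)
  | _, none => none
  | none, some y => some (α y)

/-- The dynamical extension `X × ℤ/2ℤ` with `(x,s)·(y,t) = (x·y, t + 1 - δ_{x,y})`. -/
def doubleOp {X : Type*} [DecidableEq X] (op : X → X → X) :
    X × ZMod 2 → X × ZMod 2 → X × ZMod 2 :=
  fun p q => (op p.1 q.1, if p.1 = q.1 then q.2 else q.2 + 1)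

/-- The Bachiller–Cedó–Jespers–Okniński operation on `A × B × I`. -/
def bcjoOp {A B I : Type*} [AddCommGroup A] [AddCommGroup B] [DecidableEq I]
    (φ₁ : A → B) (φ₂ : B →+ A) : A × B × I → A × B × I → A × B × I :=
  fun p q =>
    if p.2.2 = q.2.2 then (q.1, q.2.1 - φ₁ (p.1 - q.1), q.2.2)
    else (q.1 - φ₂ p.2.1, q.2.1, q.2.2)

/-- One-sided extension of `X` by a cycle set `Y` acting by automorphisms:
`x∘y = x·y` inside `X` and `Y`, `x∘y = y` for `x ∈ X, y ∈ Y`, `y∘x = α(y)(x)`. -/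
def sumOp {X Y : Type*} (opX : X → X → X) (opY : Y → Y → Y) (α : Y → X → X) :
    X ⊕ Y → X ⊕ Y → X ⊕ Y
  | .inl p, .inl q => .inl (opX p q)
  | .inl _, .inr y => .inr y
  | .inr y, .inl q => .inl (α y q)
  | .inr y, .inr y' => .inr (opY y y')

/-- The set of cardinalities of finite square-free non-degenerate cycle sets of
multipermutational level `m`; `N_m` is its infimum. -/
def Nset (m : ℕ) : Set ℕ :=
  {n | ∃ (X : Type) (op : X → X → X), Finite X ∧ IsCycleSet op ∧ IsSquareFree op ∧
        IsNonDeg op ∧ HasMPL op m ∧ Nat.card X = n}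

/-- The set of cardinalities of finite square-free cycle sets of level `k` admitting
an automorphism `α` with `σ_{[k-1]}(x) ≠ σ_{[k-1]}(α(x))` for some `x`;
`N̄_k` is its infimum. -/
def NbarSet (k : ℕ) : Set ℕ :=
  {n | ∃ (X : Type) (op : X → X → X), Finite X ∧ IsCycleSet op ∧ IsSquareFree op ∧
        HasMPL op k ∧ (∃ (α : X → X) (x : X), IsAut op α ∧ ¬ retRel op (k - 1) x (α x)) ∧
        Nat.card X = n}

/-- A non-degenerate left cycle set gives a non-degenerate involutive
set-theoretic solution of the Yang–Baxter equation. -/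
theorem stmt0 {X : Type*} (op : X → X → X) (h : IsCycleSet op) (hnd : IsNonDeg op)
    (lam : X → X → X) (hlam : ∀ x y, lam x (op x y) = y ∧ op x (lam x y) = y) :
    Function.Bijective (rmap op lam) ∧
    (rmap op lam) ∘ (rmap op lam) = id ∧
    (r1map (rmap op lam)) ∘ (r2map (rmap op lam)) ∘ (r1map (rmap op lam)) =
      (r2map (rmap op lam)) ∘ (r1map (rmap op lam)) ∘ (r2map (rmap op lam)) ∧
    (∀ x, Function.Bijective (lam x)) ∧
    (∀ y, Function.Bijective (fun x => op (lam x y) x)) := by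
  obtain ⟨hbij, hcyc⟩ := h
  have hl1 : ∀ x y, lam x (op x y) = y := fun x y => (hlam x y).1
  have hl2 : ∀ x y, op x (lam x y) = y := fun x y => (hlam x y).2
  -- r ∘ r = id
  have hrr : (rmap op lam) ∘ (rmap op lam) = id := by
    funext p
    obtain ⟨x, y⟩ := p
    simp [rmap, hl1, hl2]
  have hinv : Function.Involutive (rmap op lam) := fun p => congrFun hrr p
  refine ⟨hinv.bijective, hrr, ?_, ?_, ?_⟩
  · -- braid relation
    funext p
    obtain ⟨x, y, z⟩ := p
    obtain ⟨b, rfl⟩ : ∃ b, op x b = y := ⟨lam x y, hl2 x y⟩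
    obtain ⟨c, rfl⟩ : ∃ c, op (op x b) (op x c) = z :=
      ⟨lam x (lam (op x b) z), by rw [hl2, hl2]⟩
    have e1 : lam (op b x) (op (op x b) (op x c)) = op b c := by
      rw [hcyc x b c]; exact hl1 _ _
    have e2 : lam (op c x) (op (op x c) (op x b)) = op c b := by
      rw [hcyc x c b]; exact hl1 _ _
    simp only [Function.comp_apply, r1map, r2map, rmap, hl1, e1, e2, Prod.mk.injEq]
    exact ⟨trivial, trivial, hcyc b c x⟩
  · -- λ_x bijective
    intro x
    exact Function.bijective_iff_has_inverse.2 ⟨op x, hl2 x, hl1 x⟩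
  · -- ρ_y bijective
    intro y
    constructor
    · intro x x' hxx'
      set a := lam x y with ha
      set b := lam x' y with hb
      have hya : op x a = y := hl2 x y
      have hyb : op x' b = y := hl2 x' y
      have hw : op a x = op b x' := hxx'
      have k1 : op y y = op (op a x) (op a a) := by
        rw [← hya, hcyc x a a]
      have k2 : op y y = op (op b x') (op b b) := by
        rw [← hyb, hcyc x' b b]
      have hab : a = b := by
        apply hnd.injective
        have : op (op a x) (op a a) = op (op a x) (op b b) := by
          rw [← k1, hw, k2]
        exact (hbij (op a x)).injective this
      have : op a x = op a x' := by rw [hw, ← hab]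
      exact (hbij a).injective this
    · intro w
      obtain ⟨a, ha⟩ := hnd.surjective (lam w (op y y))
      simp only at ha
      refine ⟨lam a w, ?_⟩
      have hax : op a (lam a w) = w := hl2 a w
      have hq : op (op (lam a w) a) (op (lam a w) a) = op y y := by
        rw [← hcyc a (lam a w) a, hax, ha, hl2]
      have hxa : op (lam a w) a = y := hnd.injective hq
      show op (lam (lam a w) y) (lam a w) = w
      have : lam (lam a w) y = a := by rw [← hxa, hl1]
      rw [this, hax]
end

section
/- Conversely, if (X,r) is a non-degenerate involutive set-theoretic solution of the Yang-Baxter equation with r(x,y) = (λ_x(y), ρ_y(x)), then the binary operation x·y := λ_x^{-1}(y) makes X into a non-degenerate left cycle set. -/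
/-- A non-degenerate involutive solution of the Yang–Baxter equation
gives a non-degenerate left cycle set via `x·y := λ_x⁻¹(y)`. -/
theorem stmt1 {X : Type*} (r : X × X → X × X) (lam rho : X → X → X)
    (hr : ∀ x y, r (x, y) = (lam x y, rho y x))
    (hlam : ∀ x, Function.Bijective (lam x))
    (hrho : ∀ y, Function.Bijective (rho y))
    (hinv : r ∘ r = id)
    (hbraid : (r1map r) ∘ (r2map r) ∘ (r1map r) = (r2map r) ∘ (r1map r) ∘ (r2map r))
    (op : X → X → X) (hop : ∀ x y, lam x (op x y) = y ∧ op x (lam x y) = y) :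
    IsCycleSet op ∧ IsNonDeg op := by
  -- extract involutivity equations
  have hinv1 : ∀ x y, lam (lam x y) (rho y x) = x := by
    intro x y
    have := congrFun hinv (x, y)
    simp only [Function.comp_apply, id_eq, hr] at this
    exact congrArg Prod.fst this
  have hinv2 : ∀ x y, rho (rho y x) (lam x y) = y := by
    intro x y
    have := congrFun hinv (x, y)
    simp only [Function.comp_apply, id_eq, hr] at this
    exact congrArg Prod.snd this
  -- extract the first braid equation
  have hb1 : ∀ x y z, lam (lam x y) (lam (rho y x) z) = lam x (lam y z) := by
    intro x y z
    have := congrFun hbraid (x, y, z)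
    simp only [Function.comp_apply, r1map, r2map, hr] at this
    exact congrArg Prod.fst this
  -- rho in terms of op
  have hrho_op : ∀ x y, rho y x = op (lam x y) x := by
    intro x y
    have h := (hop (lam x y) (rho y x)).2
    rw [hinv1] at h
    exact h.symm
  -- key identity
  have hkey : ∀ x u z, lam u (lam (op u x) z) = lam x (lam (op x u) z) := by
    intro x u z
    have h := hb1 x (op x u) z
    rw [(hop x u).1] at h
    rw [hrho_op x (op x u), (hop x u).1] at h
    exact h
  have hbij : ∀ x, Function.Bijective (op x) := by
    intro x
    exact Function.bijective_iff_has_inverse.2 ⟨lam x, fun y => (hop x y).1, fun y => (hop x y).2⟩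
  refine ⟨⟨hbij, ?_⟩, ?_⟩
  · -- cycloid identity
    intro x y z
    have h := hkey x y (op (op x y) (op x z))
    rw [(hop (op x y) (op x z)).1, (hop x z).1] at h
    -- h : lam y (lam (op y x) (op (op x y) (op x z))) = z
    have h2 : lam (op y x) (op (op x y) (op x z)) = op y z := by
      have := congrArg (op y) h
      rwa [(hop y _).2] at this
    have := congrArg (op (op y x)) h2
    rwa [(hop (op y x) _).2] at this
  · -- non-degeneracy
    constructor
    · intro a b hab
      simp only at hab
      set t := op a a with hta
      have hlat : lam a t = a := by rw [hta, (hop a a).1]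
      have hlbt : lam b t = b := by rw [hab, (hop b b).1]
      have hra : rho t a = t := by
        have h1 := hinv1 a t
        rw [hlat] at h1
        -- lam a (rho t a) = a = lam a t
        have := (hlam a).1 (h1.trans hlat.symm)
        exact this
      have hrb : rho t b = t := by
        have h1 := hinv1 b t
        rw [hlbt] at h1
        exact (hlam b).1 (h1.trans hlbt.symm)
      exact (hrho t).1 (hra.trans hrb.symm)
    · intro y
      obtain ⟨s, hs⟩ := (hrho y).2 y
      refine ⟨s, ?_⟩
      have h2 := hinv2 s y
      rw [hs] at h2
      -- h2 : rho y (lam s y) = y = rho y s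
      have hls : lam s y = s := (hrho y).1 (h2.trans hs.symm)
      simp only
      calc op s s = op s (lam s y) := by rw [hls]
        _ = y := (hop s y).2
end

section
/- Let X be a left cycle set, and let X₁ be the set X × ℤ/2ℤ with operation (x,s)·(y,t) := (x·y, t) if x = y and (x·y, t+1) if x ≠ y. Then X₁ is a left cycle set, and for every automorphism f of X, the map f₁(x,s) := (f(x), s) is an automorphism of X₁. -/
/-- `X × ℤ/2ℤ` with `(x,s)·(y,t) = (x·y, t + 1 - δ_{x,y})` is a cycle
set, and any automorphism `f` of `X` lifts to the automorphism `(x,s) ↦ (f x, s)`. -/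
theorem stmt3 {X : Type*} [DecidableEq X] (op : X → X → X) (h : IsCycleSet op) :
    IsCycleSet (doubleOp op) ∧
    ∀ f : X → X, IsAut op f →
      IsAut (doubleOp op) (fun p : X × ZMod 2 => (f p.1, p.2)) := by

  obtain ⟨hbij, hcyc⟩ := h
  constructor
  · constructor
    · rintro ⟨x, s⟩
      constructor
      · rintro ⟨y, t⟩ ⟨y', t'⟩ he
        simp only [doubleOp, Prod.mk.injEq] at he
        have hy : y = y' := (hbij x).1 he.1
        subst hy
        have := he.2
        split_ifs at this <;> simp_all
      · rintro ⟨a, b⟩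
        obtain ⟨y, hy⟩ := (hbij x).2 a
        by_cases hxy : x = y
        · exact ⟨(y, b), by subst hxy; simp [doubleOp, hy]⟩
        · exact ⟨(y, b - 1), by simp [doubleOp, hxy, hy]⟩
    · rintro ⟨x, s⟩ ⟨y, t⟩ ⟨z, u⟩
      simp only [doubleOp, Prod.mk.injEq]
      refine ⟨hcyc x y z, ?_⟩
      have h1 : (op x y = op x z) ↔ (y = z) := ⟨fun e => (hbij x).1 e, fun e => by rw [e]⟩
      have h2 : (op y x = op y z) ↔ (x = z) := ⟨fun e => (hbij y).1 e, fun e => by rw [e]⟩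
      split_ifs <;> simp_all
  · rintro f ⟨hfb, hf⟩
    constructor
    · exact ⟨fun p q hpq => by
        simp only [Prod.mk.injEq] at hpq
        exact Prod.ext (hfb.1 hpq.1) hpq.2,
      fun p => by
        obtain ⟨x, hx⟩ := hfb.2 p.1
        exact ⟨(x, p.2), by simp [hx]⟩⟩
    · rintro ⟨x, s⟩ ⟨y, t⟩
      simp only [doubleOp, hf, Prod.mk.injEq, true_and]
      have : (f x = f y) ↔ (x = y) := ⟨fun e => hfb.1 e, fun e => by rw [e]⟩
      simp [this]
end

section
/- Let X be a left cycle set, α an automorphism of X, and z ∉ X. Define an operation ∘ on X ∪ {z} by: x∘y = x·y if x,y ∈ X; x∘z = z for all x; z∘y = α(y) for y ∈ X. Then (X ∪ {z}, ∘) is a left cycle set, and if X is square-free then so is X ∪ {z}. -/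
theorem option_map_bij {X : Type*} {f : X → X} (hf : Function.Bijective f) :
    Function.Bijective (Option.map f) := by
  let e := Equiv.optionCongr (Equiv.ofBijective f hf)
  have he : Option.map f = e := by
    funext b; cases b <;> simp [e, Equiv.optionCongr]
  rw [he]; exact e.bijective

/-- The one-sided extension `X ∪ {z}` of a cycle set `X` by an
automorphism `α` is a cycle set, square-free if `X` is. -/
theorem stmt4 {X : Type*} (op : X → X → X) (h : IsCycleSet op)
    (α : X → X) (hα : IsAut op α) :
    IsCycleSet (extOp op α) ∧ (IsSquareFree op → IsSquareFree (extOp op α)) := by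
  have hmap : ∀ a : Option X, extOp op α a =
      Option.map (Option.elim a α op) := by
    intro a; funext b; cases a <;> cases b <;> rfl
  constructor
  · constructor
    · intro a
      rw [hmap a]
      rcases a with _|x
      · exact option_map_bij hα.1
      · exact option_map_bij (h.1 x)
    · rintro (_|x) (_|y) (_|z) <;>
        simp only [extOp, Option.some.injEq] <;>
        first
        | rfl
        | rw [← hα.2]
        | rw [hα.2]
        | exact h.2 x y z
  · intro hsf
    rintro (_|x)
    · rfl
    · exact congrArg some (hsf x)
end

section
/- Let X be a left cycle set, α ∈ Aut(X), z ∉ X, and suppose α ≠ σ_x for all x ∈ X. Then the retraction σ(X ∪ {z}) of the one-sided extension (X ∪ {z}, ∘) (where x∘y = x·y for x,y ∈ X, x∘z = z, z∘y = α(y)) is isomorphic as a left cycle set to the set σ(X) ∪ {σ_z} with operation: σ_x ∘ σ_y = σ_{x·y} for x,y ∈ X, σ_x ∘ σ_z = σ_z, and σ_z ∘ σ_y = σ_{α(y)}. -/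
/-- If `α ≠ σ_x` for all `x`, the retraction of the one-sided
extension `X ∪ {z}` is isomorphic to `σ(X) ∪ {σ_z}` with the indicated operation. -/
theorem stmt5 {X : Type*} (op : X → X → X) (h : IsCycleSet op)
    (α : X → X) (hα : IsAut op α) (hne : ∀ x : X, α ≠ op x)
    (mulO : Option ↥(Set.range op) → Option ↥(Set.range op) → Option ↥(Set.range op))
    (h1 : ∀ x y : X, mulO (some ⟨op x, x, rfl⟩) (some ⟨op y, y, rfl⟩) =
        some ⟨op (op x y), op x y, rfl⟩)
    (h2 : ∀ a, mulO a none = none)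
    (h3 : ∀ y : X, mulO none (some ⟨op y, y, rfl⟩) = some ⟨op (α y), α y, rfl⟩)
    (mulT : ↥(Set.range (extOp op α)) → ↥(Set.range (extOp op α)) →
      ↥(Set.range (extOp op α)))
    (hT : ∀ w w', mulT ⟨extOp op α w, w, rfl⟩ ⟨extOp op α w', w', rfl⟩ =
        ⟨extOp op α (extOp op α w w'), extOp op α w w', rfl⟩) :
    ∃ φ : ↥(Set.range (extOp op α)) ≃ Option ↥(Set.range op),
      (∀ x : X, φ ⟨extOp op α (some x), some x, rfl⟩ = some ⟨op x, x, rfl⟩) ∧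
      φ ⟨extOp op α none, none, rfl⟩ = none ∧
      ∀ a b, φ (mulT a b) = mulO (φ a) (φ b) := by
  classical
  have hinj : ∀ x y : X, extOp op α (some x) = extOp op α (some y) → op x = op y := by
    intro x y hxy
    funext z
    have := congrFun hxy (some z)
    simpa [extOp] using this
  have hnn : ∀ x : X, extOp op α (some x) ≠ extOp op α none := by
    intro x hx
    apply hne x
    funext z
    have := congrFun hx (some z)
    simp [extOp] at this
    exact this.symm
  have hrev : ∀ x y : X, op x = op y → extOp op α (some x) = extOp op α (some y) := by
    intro x y hxy
    funext z
    cases z <;> simp [extOp, hxy]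
  let F : ↥(Set.range (extOp op α)) → Option ↥(Set.range op) := fun a =>
    Option.rec none (fun x => some ⟨op x, x, rfl⟩) a.2.choose
  have Fspec : ∀ (a : ↥(Set.range (extOp op α))) (x : X),
      a.1 = extOp op α (some x) → F a = some ⟨op x, x, rfl⟩ := by
    intro a x hx
    have hc : extOp op α a.2.choose = a.1 := a.2.choose_spec
    show Option.rec (motive := fun _ => Option ↥(Set.range op)) none
      (fun x => some ⟨op x, x, rfl⟩) a.2.choose = _
    cases hw : a.2.choose with
    | none => exact absurd (((hw ▸ hc : extOp op α none = ↑a)).trans hx).symm (hnn x)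
    | some x' =>
        have : op x' = op x := hinj _ _ ((hw ▸ hc).trans hx)
        simp [this]
  have Fnone : ∀ (a : ↥(Set.range (extOp op α))),
      a.1 = extOp op α none → F a = none := by
    intro a hx
    have hc : extOp op α a.2.choose = a.1 := a.2.choose_spec
    show Option.rec (motive := fun _ => Option ↥(Set.range op)) none
      (fun x => some ⟨op x, x, rfl⟩) a.2.choose = _
    cases hw : a.2.choose with
    | none => rfl
    | some x' => exact absurd ((hw ▸ hc).trans hx) (hnn x')
  have hbij : Function.Bijective F := by
    constructor
    · intro a b hab
      obtain ⟨w, hw⟩ := a.2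
      obtain ⟨w', hw'⟩ := b.2
      apply Subtype.ext
      cases w with
      | none =>
          cases w' with
          | none => rw [← hw, ← hw']
          | some y =>
              rw [Fnone a hw.symm, Fspec b y hw'.symm] at hab
              exact absurd hab (by simp)
      | some x =>
          cases w' with
          | none =>
              rw [Fspec a x hw.symm, Fnone b hw'.symm] at hab
              exact absurd hab (by simp)
          | some y =>
              rw [Fspec a x hw.symm, Fspec b y hw'.symm] at hab
              have : op x = op y := congrArg Subtype.val (Option.some_injective _ hab)
              rw [← hw, ← hw']
              exact hrev x y this
    · intro u
      cases u with
      | none => exact ⟨⟨extOp op α none, none, rfl⟩, Fnone _ rfl⟩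
      | some v =>
          obtain ⟨x, hx⟩ := v.2
          exact ⟨⟨extOp op α (some x), some x, rfl⟩, by
            rw [Fspec _ x rfl]
            exact congrArg some (Subtype.ext hx)⟩
  refine ⟨Equiv.ofBijective F hbij, fun x => Fspec _ x rfl, Fnone _ rfl, ?_⟩
  intro a b
  obtain ⟨w, hw⟩ := a.2
  obtain ⟨w', hw'⟩ := b.2
  have ha : a = ⟨extOp op α w, w, rfl⟩ := Subtype.ext hw.symm
  have hb : b = ⟨extOp op α w', w', rfl⟩ := Subtype.ext hw'.symm
  subst ha; subst hb
  show F (mulT _ _) = mulO (F _) (F _)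
  rw [hT]
  cases w with
  | none =>
      cases w' with
      | none =>
          rw [Fnone ⟨extOp op α (extOp op α none none), extOp op α none none, rfl⟩ rfl,
            Fnone ⟨extOp op α none, none, rfl⟩ rfl, h2]
      | some y =>
          rw [Fspec ⟨extOp op α (extOp op α none (some y)), extOp op α none (some y), rfl⟩
              (α y) rfl,
            Fnone ⟨extOp op α none, none, rfl⟩ rfl,
            Fspec ⟨extOp op α (some y), some y, rfl⟩ y rfl, h3]
  | some x =>
      cases w' with
      | none =>
          rw [Fnone ⟨extOp op α (extOp op α (some x) none), extOp op α (some x) none, rfl⟩ rfl,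
            Fspec ⟨extOp op α (some x), some x, rfl⟩ x rfl,
            Fnone ⟨extOp op α none, none, rfl⟩ rfl, h2]
      | some y =>
          rw [Fspec ⟨extOp op α (extOp op α (some x) (some y)),
              extOp op α (some x) (some y), rfl⟩ (op x y) rfl,
            Fspec ⟨extOp op α (some x), some x, rfl⟩ x rfl,
            Fspec ⟨extOp op α (some y), some y, rfl⟩ y rfl, h1]
end

section
/- Let X be a finite square-free left cycle set of multipermutational level k, z ∉ X, and α ∈ Aut(X) such that there exists x ∈ X with σ_{[k-1]}(x) ≠ σ_{[k-1]}(α(x)). Then the one-sided extension (X ∪ {z}, ∘), where x∘y = x·y for x,y ∈ X, x∘z = z, and z∘y = α(y), is a square-free left cycle set of multipermutational level k+1. -/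
lemma retRel_refl {X : Type*} (op : X → X → X) : ∀ n (x : X), retRel op n x x
  | 0, _ => rfl
  | n+1, _ => fun _ => retRel_refl op n _

lemma retRel_some {X : Type*} (op : X → X → X) (α : X → X) :
    ∀ n (x y : X), retRel (extOp op α) n (some x) (some y) ↔ retRel op n x y := by
  intro n
  induction n with
  | zero => intro x y; exact Option.some_inj
  | succ n ih =>
    intro x y
    constructor
    · intro h w
      exact (ih _ _).1 (h (some w))
    · intro h z
      cases z with
      | none => exact retRel_refl _ n _
      | some w => exact (ih _ _).2 (h w)

/-- The one-sided extension of a finite square-free cycle set of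
level `k` by an automorphism moving some fiber of `σ_{[k-1]}` has level `k+1`. -/
theorem stmt6 {X : Type*} [Finite X] (op : X → X → X) (k : ℕ)
    (h : IsCycleSet op) (hsf : IsSquareFree op) (hmpl : HasMPL op k)
    (α : X → X) (hα : IsAut op α) (x : X) (hx : ¬ retRel op (k - 1) x (α x)) :
    IsCycleSet (extOp op α) ∧ IsSquareFree (extOp op α) ∧
      HasMPL (extOp op α) (k + 1) := by
  obtain ⟨m, rfl⟩ : ∃ m, k = m + 1 := by
    cases k with
    | zero => exact absurd (hmpl.1 x (α x)) hx
    | succ m => exact ⟨m, rfl⟩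
  obtain ⟨hbij, hid⟩ := h
  refine ⟨⟨?_, ?_⟩, ?_, ?_, ?_⟩
  · intro a
    have key : ∃ f : X → X, Function.Bijective f ∧ extOp op α a = Option.map f := by
      cases a with
      | some u => exact ⟨op u, hbij u, funext fun b => by cases b <;> rfl⟩
      | none => exact ⟨α, hα.1, funext fun b => by cases b <;> rfl⟩
    obtain ⟨f, hf, hfe⟩ := key
    rw [hfe]
    exact (Equiv.optionCongr (Equiv.ofBijective f hf)).bijective
  · intro a b c
    cases a <;> cases b <;> cases c <;> simp [extOp, hα.2, hid]
  · intro a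
    cases a with
    | none => rfl
    | some u => simp [extOp, hsf u]
  · intro a b z
    have hsome : ∀ (u v : X), retRel (extOp op α) (m+1) (some u) (some v) :=
      fun u v => (retRel_some op α _ u v).2 (hmpl.1 u v)
    cases a <;> cases b <;> cases z <;>
      first
      | exact retRel_refl _ _ _
      | exact hsome _ _
  · intro j hj hall
    rcases Nat.lt_succ_iff_lt_or_eq.mp hj with hj' | rfl
    · exact hmpl.2 j hj' fun u v => (retRel_some op α j u v).1 (hall (some u) (some v))
    · have h1 : retRel op m (op x x) (α x) :=
        (retRel_some op α m _ _).1 (hall (some x) none (some x))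
      rw [hsf x] at h1
      exact hx h1
end

section
/- Let S be a finite abelian group, X a left cycle set, and f: X×X → S a function satisfying f(i,k) + f(i·j, i·k) = f(j,k) + f(j·i, j·k) for all i,j,k ∈ X. Then the operation (s,i)·(t,j) := (t + f(i,j), i·j) on S×X makes S×X a left cycle set. -/
/-- Constant dynamical extension by a 2-cocycle `f` with values in a
finite abelian group `S`. -/
theorem stmt9 {X S : Type*} [AddCommGroup S] [Finite S]
    (op : X → X → X) (h : IsCycleSet op) (f : X → X → S)
    (hf : ∀ i j k, f i k + f (op i j) (op i k) = f j k + f (op j i) (op j k)) :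
    IsCycleSet (fun p q : S × X => (q.1 + f p.2 q.2, op p.2 q.2)) := by
  constructor
  · rintro ⟨s, x⟩
    constructor
    · rintro ⟨t, y⟩ ⟨u, z⟩ he
      simp only [Prod.mk.injEq] at he
      have hy : y = z := (h.1 x).1 he.2
      subst hy
      exact Prod.ext (by have := he.1; simpa using this) rfl
    · rintro ⟨t, y⟩
      obtain ⟨z, hz⟩ := (h.1 x).2 y
      exact ⟨(t - f x z, z), by simp [hz]⟩
  · rintro ⟨s, x⟩ ⟨t, y⟩ ⟨u, z⟩
    simp only [Prod.mk.injEq]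
    constructor
    · have := hf x y z
      rw [add_assoc, add_assoc, this]
    · exact h.2 x y z
end

section
/- Let X be a left cycle set, k a natural number, and S := ℤ/kℤ. Then the operation on S×X defined by (s,i)·(t,j) := (t, i·j) if i = j and (t+1, i·j) if i ≠ j makes S×X a left cycle set, and if X is square-free then so is S×X. -/
/-- `ℤ/kℤ × X` with `(s,i)·(t,j) = (t + 1 - δ_{i,j}, i·j)` is a
cycle set, square-free if `X` is. -/
theorem stmt10 {X : Type*} [DecidableEq X] (op : X → X → X) (k : ℕ)
    (h : IsCycleSet op) :
    IsCycleSet (fun p q : ZMod k × X =>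
        (if p.2 = q.2 then q.1 else q.1 + 1, op p.2 q.2)) ∧
    (IsSquareFree op → IsSquareFree (fun p q : ZMod k × X =>
        (if p.2 = q.2 then q.1 else q.1 + 1, op p.2 q.2))) := by
  obtain ⟨hbij, hcyc⟩ := h
  constructor
  · constructor
    · rintro ⟨s, x⟩
      constructor
      · rintro ⟨t, y⟩ ⟨u, z⟩ he
        simp only [Prod.mk.injEq] at he
        obtain ⟨h1, h2⟩ := he
        have hyz : y = z := (hbij x).injective h2
        subst hyz
        rcases eq_or_ne x y with rfl | hne
        · simpa using h1
        · simp [hne] at h1; simp [h1]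
      · rintro ⟨u, j⟩
        obtain ⟨y, hy⟩ := (hbij x).surjective j
        subst hy
        refine ⟨(if x = y then u else u - 1, y), ?_⟩
        by_cases hxy : x = y <;> simp [hxy]
    · rintro ⟨s, x⟩ ⟨t, y⟩ ⟨u, z⟩
      simp only [Prod.mk.injEq]
      constructor
      · by_cases hyz : y = z <;> by_cases hxz : x = z <;>
          simp [(hbij _).injective.eq_iff, hyz, hxz]
      · exact hcyc x y z
  · intro hsf
    rintro ⟨s, x⟩
    simp [hsf x]
end

section
/- Let A, B be abelian groups, I a set, φ₁: A → B a function with φ₁(-a) = φ₁(a) for all a, and φ₂: B → A a group homomorphism. Define on X(A,B,I) := A×B×I the operation (a,b,i)·(c,d,j) := (c, d - φ₁(a-c), j) if i = j and (c - φ₂(b), d, j) if i ≠ j. Then X(A,B,I) is a non-degenerate left cycle set. -/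
/-- The Bachiller–Cedó–Jespers–Okniński construction `X(A,B,I)` is a
non-degenerate left cycle set. -/
theorem stmt11 {A B I : Type*} [AddCommGroup A] [AddCommGroup B] [DecidableEq I]
    (φ₁ : A → B) (φ₂ : B →+ A) (hφ₁ : ∀ a, φ₁ (-a) = φ₁ a) :
    IsCycleSet (bcjoOp (I := I) φ₁ φ₂) ∧ IsNonDeg (bcjoOp (I := I) φ₁ φ₂) := by
  constructor
  · constructor
    · intro p
      rw [Function.bijective_iff_has_inverse]
      refine ⟨fun q => if p.2.2 = q.2.2 then (q.1, q.2.1 + φ₁ (p.1 - q.1), q.2.2)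
        else (q.1 + φ₂ p.2.1, q.2.1, q.2.2), fun q => ?_, fun q => ?_⟩ <;>
        by_cases h : p.2.2 = q.2.2 <;>
        simp [bcjoOp, h, sub_add_cancel, add_sub_cancel_right]
    · rintro ⟨a, b, i⟩ ⟨c, d, j⟩ ⟨e, f, k⟩
      by_cases h1 : i = j <;> by_cases h2 : i = k <;> by_cases h3 : j = k <;> subst_vars <;>
        simp only [bcjoOp, Prod.mk.injEq] <;> split_ifs <;>
        simp_all [Prod.mk.injEq] <;> try constructor
      all_goals first
        | abel1
        | (rw [show φ₁ (c - a) = φ₁ (a - c) by rw [← hφ₁ (a - c), neg_sub]]; abel1)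
  · rw [IsNonDeg, Function.bijective_iff_has_inverse]
    exact ⟨fun q => (q.1, q.2.1 + φ₁ 0, q.2.2), fun q => by simp [bcjoOp],
      fun q => by simp [bcjoOp]⟩
end
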